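/- If every injective left R-module and every injective right R-module is flat (R is an IF ring), then every right R-module is Gorenstein flat, i.e., the right weak Gorenstein global dimension of R is 0. -/

import Mathlib

open TensorProduct

universe u

section NCTensor
variable (R : Type u) [Ring R]

/-- Generators of the defect submodule used to define the tensor product of a right
`R`-module `N` and a left `R`-module `M` over a (possibly noncommutative) ring `R`. -/
def NCRel (N M : Type u) [AddCommGroup N] [Module Rᵐᵒᵖ N] [AddCommGroup M] [Module R M] :
    Submodule ℤ (N ⊗[ℤ] M) :=
  Submodule.span ℤ { t | ∃ (n : N) (r : R) (m : M),
    t = (MulOpposite.op r • n) ⊗ₜ[ℤ] m - n ⊗ₜ[ℤ] (r • m) }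

/-- The tensor product `N ⊗_R M` of a right `R`-module and a left `R`-module, as an
abelian group. -/
def NCTensor (N M : Type u) [AddCommGroup N] [Module Rᵐᵒᵖ N] [AddCommGroup M] [Module R M] :
    Type u :=
  (N ⊗[ℤ] M) ⧸ NCRel R N M

noncomputable instance (N M : Type u) [AddCommGroup N] [Module Rᵐᵒᵖ N] [AddCommGroup M] [Module R M] :
    AddCommGroup (NCTensor R N M) :=
  inferInstanceAs (AddCommGroup ((N ⊗[ℤ] M) ⧸ NCRel R N M))

noncomputable instance (N M : Type u) [AddCommGroup N] [Module Rᵐᵒᵖ N] [AddCommGroup M] [Module R M] :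
    Module ℤ (NCTensor R N M) :=
  inferInstanceAs (Module ℤ ((N ⊗[ℤ] M) ⧸ NCRel R N M))

/-- The map `I ⊗_R M → I ⊗_R M'` induced by a map `M →ₗ[R] M'` of left modules. -/
noncomputable def NCmap (N : Type u) [AddCommGroup N] [Module Rᵐᵒᵖ N] {M M' : Type u} [AddCommGroup M]
    [Module R M] [AddCommGroup M'] [Module R M'] (f : M →ₗ[R] M') :
    NCTensor R N M →ₗ[ℤ] NCTensor R N M' :=
  Submodule.mapQ _ _ (LinearMap.lTensor N (f.restrictScalars ℤ)) <| by
    rw [NCRel, Submodule.span_le]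
    rintro t ⟨n, r, m, rfl⟩
    refine Submodule.mem_comap.mpr (Submodule.subset_span ?_)
    refine ⟨n, r, f m, ?_⟩
    erw [map_sub, LinearMap.lTensor_tmul, LinearMap.lTensor_tmul]
    simp

/-- The map `N ⊗_R M → N' ⊗_R M` induced by a map `N →ₗ[Rᵐᵒᵖ] N'` of right modules. -/
noncomputable def NCmapL (R : Type u) [Ring R] {N N' : Type u} [AddCommGroup N]
    [Module Rᵐᵒᵖ N] [AddCommGroup N'] [Module Rᵐᵒᵖ N'] (M : Type u) [AddCommGroup M]
    [Module R M] (f : N →ₗ[Rᵐᵒᵖ] N') :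
    NCTensor R N M →ₗ[ℤ] NCTensor R N' M :=
  Submodule.mapQ _ _ (LinearMap.rTensor M f.toAddMonoidHom.toIntLinearMap) <| by
    rw [NCRel, Submodule.span_le]
    rintro t ⟨n, r, m, rfl⟩
    refine Submodule.mem_comap.mpr (Submodule.subset_span ?_)
    refine ⟨f n, r, m, ?_⟩
    erw [map_sub, LinearMap.rTensor_tmul, LinearMap.rTensor_tmul]
    simp

/-- A left `R`-module `M` (over a possibly noncommutative ring) is flat if tensoring with
`M` preserves injectivity of maps of right `R`-modules. -/
def FlatModule (R : Type u) [Ring R] (M : Type u) [AddCommGroup M] [Module R M] : Prop :=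
  ∀ (N N' : Type u) [AddCommGroup N] [Module Rᵐᵒᵖ N] [AddCommGroup N'] [Module Rᵐᵒᵖ N']
    (f : N →ₗ[Rᵐᵒᵖ] N'), Function.Injective f → Function.Injective (NCmapL R M f)

end NCTensor
section GDefs
variable (R : Type u) [Ring R]

/-- A complete flat resolution witnessing that `M` is a Gorenstein flat left `R`-module:
an exact sequence `⋯ → F₂ → F₁ → F₀ → F₋₁ → ⋯` of flat left `R`-modules with
`M ≅ Im(F₀ → F₋₁)` which stays exact after applying `I ⊗_R -` for every injective right
`R`-module `I`. -/
structure CompleteFlatResolution (M : Type u) [AddCommGroup M] [Module R M] :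
    Type (u + 1) where
  F : ℤ → ModuleCat.{u} R
  d : ∀ z : ℤ, F (z + 1) →ₗ[R] F z
  flat : ∀ z, FlatModule R (F z)
  exact : ∀ z, Function.Exact (d (z + 1)) (d z)
  iso : Nonempty (M ≃ₗ[R] LinearMap.range (d (-1)))
  tensorExact : ∀ (I : Type u) [AddCommGroup I] [Module Rᵐᵒᵖ I], Module.Injective Rᵐᵒᵖ I →
    ∀ z, Function.Exact (NCmap R I (d (z + 1))) (NCmap R I (d z))

/-- A left `R`-module is Gorenstein flat if it admits a complete flat resolution. -/
def IsGorensteinFlat (M : Type u) [AddCommGroup M] [Module R M] : Prop :=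
  Nonempty (CompleteFlatResolution R M)

/-- A complete projective resolution witnessing that `M` is a Gorenstein projective left
`R`-module. -/
structure CompleteProjResolution (M : Type u) [AddCommGroup M] [Module R M] :
    Type (u + 1) where
  P : ℤ → ModuleCat.{u} R
  d : ∀ z : ℤ, P (z + 1) →ₗ[R] P z
  proj : ∀ z, Module.Projective R (P z)
  exact : ∀ z, Function.Exact (d (z + 1)) (d z)
  iso : Nonempty (M ≃ₗ[R] LinearMap.range (d (-1)))
  homExact : ∀ (Q : Type u) [AddCommGroup Q] [Module R Q], Module.Projective R Q →
    ∀ z, Function.Exact (fun g : P z →ₗ[R] Q => g.comp (d z))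
      (fun g : P (z + 1) →ₗ[R] Q => g.comp (d (z + 1)))

/-- A left `R`-module is Gorenstein projective if it admits a complete projective
resolution. -/
def IsGorensteinProjective (M : Type u) [AddCommGroup M] [Module R M] : Prop :=
  Nonempty (CompleteProjResolution R M)

/-- `gfdLE R n M` : the Gorenstein flat dimension of the left `R`-module `M` is at most
`n`, i.e. `M` has a resolution of length `n` by Gorenstein flat modules. -/
def gfdLE : ℕ → ModuleCat.{u} R → Prop
  | 0, M => IsGorensteinFlat R M
  | n + 1, M => ∃ (G : ModuleCat.{u} R) (f : G →ₗ[R] M), Function.Surjective f ∧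
      IsGorensteinFlat R G ∧ gfdLE n (ModuleCat.of R (LinearMap.ker f))

/-- `gpdLE R n M` : the Gorenstein projective dimension of `M` is at most `n`. -/
def gpdLE : ℕ → ModuleCat.{u} R → Prop
  | 0, M => IsGorensteinProjective R M
  | n + 1, M => ∃ (G : ModuleCat.{u} R) (f : G →ₗ[R] M), Function.Surjective f ∧
      IsGorensteinProjective R G ∧ gpdLE n (ModuleCat.of R (LinearMap.ker f))

/-- `fdLE R n M` : the flat dimension of `M` is at most `n`. -/
def fdLE : ℕ → ModuleCat.{u} R → Prop
  | 0, M => FlatModule R M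
  | n + 1, M => ∃ (G : ModuleCat.{u} R) (f : G →ₗ[R] M), Function.Surjective f ∧
      FlatModule R G ∧ fdLE n (ModuleCat.of R (LinearMap.ker f))

/-- `pdLE R n M` : the projective dimension of `M` is at most `n`. -/
def pdLE : ℕ → ModuleCat.{u} R → Prop
  | 0, M => Module.Projective R M
  | n + 1, M => ∃ (G : ModuleCat.{u} R) (f : G →ₗ[R] M), Function.Surjective f ∧
      Module.Projective R G ∧ pdLE n (ModuleCat.of R (LinearMap.ker f))

/-- `idLE R n M` : the injective dimension of `M` is at most `n`. -/
def idLE : ℕ → ModuleCat.{u} R → Prop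
  | 0, M => Module.Injective R M
  | n + 1, M => ∃ (I : ModuleCat.{u} R) (f : M →ₗ[R] I), Function.Injective f ∧
      Module.Injective R I ∧ idLE n (ModuleCat.of R (I ⧸ LinearMap.range f))

/-- Gorenstein flat dimension, valued in `ℕ∞`. -/
noncomputable def gfDim (M : ModuleCat.{u} R) : ℕ∞ :=
  sInf {n : ℕ∞ | ∃ k : ℕ, n = k ∧ gfdLE R k M}

/-- Flat dimension, valued in `ℕ∞`. -/
noncomputable def flatDim (M : ModuleCat.{u} R) : ℕ∞ :=
  sInf {n : ℕ∞ | ∃ k : ℕ, n = k ∧ fdLE R k M}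

/-- Injective dimension, valued in `ℕ∞`. -/
noncomputable def injDim (M : ModuleCat.{u} R) : ℕ∞ :=
  sInf {n : ℕ∞ | ∃ k : ℕ, n = k ∧ idLE R k M}

/-- The (left) weak Gorenstein global dimension of `R`:
the supremum of Gorenstein flat dimensions of all left `R`-modules. -/
noncomputable def wGgldim : ℕ∞ :=
  ⨆ M : ModuleCat.{u} R, gfDim R M

/-- `IFD R` : the supremum of flat dimensions of injective left `R`-modules. -/
noncomputable def IFD : ℕ∞ :=
  ⨆ M : ModuleCat.{u} R, ⨆ (_ : Module.Injective R M), flatDim R M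

/-- A ring is left coherent if every finitely generated left ideal is finitely
presented. -/
def LeftCoherent : Prop :=
  ∀ I : Submodule R R, I.FG → Module.FinitePresentation R I

/-- A ring is right coherent if every finitely generated right ideal is finitely
presented; right ideals are viewed as left ideals of `Rᵐᵒᵖ`. -/
def RightCoherent : Prop := LeftCoherent Rᵐᵒᵖ

end GDefs

/-- `TorVanishGT R n I M` : `Tor_i^R(I, M) = 0` for all `i > n`, expressed by saying that
for every projective resolution `P• → M` of left modules, the complex `I ⊗_R P•` obtained
by tensoring with the right module `I` is exact at every spot of index `> n`. -/
noncomputable def TorVanishGT (R : Type u) [Ring R] (n : ℕ) (I : Type u) [AddCommGroup I]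
    [Module Rᵐᵒᵖ I] (M : ModuleCat.{u} R) : Prop :=
  ∀ (P : ℕ → ModuleCat.{u} R) (d : ∀ i, P (i + 1) →ₗ[R] P i) (ε : P 0 →ₗ[R] M),
    (∀ i, Module.Projective R (P i)) → Function.Surjective ε →
    Function.Exact (d 0) ε → (∀ i, Function.Exact (d (i + 1)) (d i)) →
    ∀ j, n ≤ j → Function.Exact (NCmap R I (d (j + 1))) (NCmap R I (d j))
section NCAux
open MulOpposite

variable (S : Type u) [Ring S]

/-- The quotient map onto `NCTensor`. -/
noncomputable def tmkHom (N M : Type u) [AddCommGroup N] [Module Sᵐᵒᵖ N] [AddCommGroup M]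
    [Module S M] : (N ⊗[ℤ] M) →ₗ[ℤ] NCTensor S N M :=
  (NCRel S N M).mkQ

theorem tmkHom_surjective (N M : Type u) [AddCommGroup N] [Module Sᵐᵒᵖ N] [AddCommGroup M]
    [Module S M] : Function.Surjective (tmkHom S N M) :=
  Submodule.Quotient.mk_surjective _

theorem NCTensor.induction_on {N M : Type u} [AddCommGroup N] [Module Sᵐᵒᵖ N] [AddCommGroup M]
    [Module S M] {P : NCTensor S N M → Prop} (x : NCTensor S N M)
    (zero : P 0) (tmul : ∀ (n : N) (m : M), P (tmkHom S N M (n ⊗ₜ[ℤ] m)))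
    (add : ∀ a b, P a → P b → P (a + b)) : P x := by
  obtain ⟨y, rfl⟩ := tmkHom_surjective S N M x
  induction y using TensorProduct.induction_on with
  | zero => rw [map_zero]; exact zero
  | tmul n m => exact tmul n m
  | add a b ha hb => rw [map_add]; exact add _ _ ha hb

theorem NCTensor.hom_ext {N M : Type u} [AddCommGroup N] [Module Sᵐᵒᵖ N] [AddCommGroup M]
    [Module S M] {T : Type*} [AddCommGroup T] [Module ℤ T]
    {φ ψ : NCTensor S N M →ₗ[ℤ] T}
    (h : ∀ (n : N) (m : M), φ (tmkHom S N M (n ⊗ₜ[ℤ] m)) = ψ (tmkHom S N M (n ⊗ₜ[ℤ] m))) :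
    φ = ψ := by
  ext x
  refine NCTensor.induction_on (P := fun y => φ y = ψ y) S x (by show φ 0 = ψ 0; rw [map_zero, map_zero]) h ?_
  intro a b ha hb
  rw [map_add, map_add, ha, hb]

theorem NCmap_tmk {N : Type u} [AddCommGroup N] [Module Sᵐᵒᵖ N] {M M' : Type u} [AddCommGroup M]
    [Module S M] [AddCommGroup M'] [Module S M'] (f : M →ₗ[S] M') (n : N) (m : M) :
    NCmap S N f (tmkHom S N M (n ⊗ₜ[ℤ] m)) = tmkHom S N M' (n ⊗ₜ[ℤ] f m) := rfl

theorem NCmapL_tmk {N N' : Type u} [AddCommGroup N] [Module Sᵐᵒᵖ N] [AddCommGroup N']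
    [Module Sᵐᵒᵖ N'] {M : Type u} [AddCommGroup M] [Module S M] (f : N →ₗ[Sᵐᵒᵖ] N')
    (n : N) (m : M) :
    NCmapL S M f (tmkHom S N M (n ⊗ₜ[ℤ] m)) = tmkHom S N' M (f n ⊗ₜ[ℤ] m) := rfl

theorem NCmap_comp {N : Type u} [AddCommGroup N] [Module Sᵐᵒᵖ N] {M M' M'' : Type u}
    [AddCommGroup M] [Module S M] [AddCommGroup M'] [Module S M'] [AddCommGroup M'']
    [Module S M''] (f : M' →ₗ[S] M'') (g : M →ₗ[S] M') :
    NCmap S N (f.comp g) = (NCmap S N f).comp (NCmap S N g) := by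
  refine NCTensor.hom_ext S ?_
  intro n m
  rw [LinearMap.comp_apply, NCmap_tmk, NCmap_tmk, NCmap_tmk, LinearMap.comp_apply]

theorem NCmap_surjective {N : Type u} [AddCommGroup N] [Module Sᵐᵒᵖ N] {M M' : Type u}
    [AddCommGroup M] [Module S M] [AddCommGroup M'] [Module S M'] (f : M →ₗ[S] M')
    (hf : Function.Surjective f) : Function.Surjective (NCmap S N f) := by
  intro y
  refine NCTensor.induction_on (P := fun y => ∃ x, NCmap S N f x = y) S y ⟨0, by simp⟩ ?_ ?_
  · intro n m'
    obtain ⟨m, rfl⟩ := hf m'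
    exact ⟨tmkHom S N M (n ⊗ₜ[ℤ] m), NCmap_tmk S f n m⟩
  · rintro a b ⟨x, rfl⟩ ⟨y, rfl⟩
    exact ⟨x + y, by simp⟩
end NCAux
section NCAux2
open MulOpposite

variable (S : Type u) [Ring S]

theorem NCmap_tmk' {N : Type u} [AddCommGroup N] [Module Sᵐᵒᵖ N] {M M' : Type u} [AddCommGroup M]
    [Module S M] [AddCommGroup M'] [Module S M'] (f : M →ₗ[S] M') (t : N ⊗[ℤ] M) :
    NCmap S N f (tmkHom S N M t) = tmkHom S N M' (LinearMap.lTensor N (f.restrictScalars ℤ) t) :=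
  rfl

theorem NCmap_zero {N : Type u} [AddCommGroup N] [Module Sᵐᵒᵖ N] {M M' : Type u} [AddCommGroup M]
    [Module S M] [AddCommGroup M'] [Module S M'] :
    NCmap S N (0 : M →ₗ[S] M') = 0 := by
  refine NCTensor.hom_ext S ?_
  intro n m
  rw [NCmap_tmk]
  simp [tmkHom]
  rfl

theorem NCmap_exact {J : Type u} [AddCommGroup J] [Module Sᵐᵒᵖ J] {A B C : Type u}
    [AddCommGroup A] [Module S A] [AddCommGroup B] [Module S B] [AddCommGroup C] [Module S C]
    (g : A →ₗ[S] B) (f : B →ₗ[S] C) (hfg : Function.Exact g f) (hf : Function.Surjective f) :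
    Function.Exact (NCmap S J g) (NCmap S J f) := by
  set φ := LinearMap.lTensor J (f.restrictScalars ℤ) with hφ
  set ψ := LinearMap.lTensor J (g.restrictScalars ℤ) with hψ
  have hℤ : Function.Exact ψ φ := lTensor_exact J hfg hf
  have hspan : NCRel S J C ≤ (NCRel S J B).map φ := by
    rw [NCRel]; refine Submodule.span_le.mpr ?_
    rintro t ⟨j, r, c, rfl⟩
    obtain ⟨b, rfl⟩ := hf c
    refine ⟨(op r • j) ⊗ₜ[ℤ] b - j ⊗ₜ[ℤ] (r • b), Submodule.subset_span ⟨j, r, b, rfl⟩, ?_⟩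
    simp [hφ, map_sub, LinearMap.lTensor_tmul, map_smul]
  intro y
  obtain ⟨t, rfl⟩ := tmkHom_surjective S J B y
  constructor
  · intro h0
    rw [NCmap_tmk'] at h0
    have ht : φ t ∈ NCRel S J C := by
      have := (Submodule.Quotient.mk_eq_zero (NCRel S J C) (x := φ t)).mp
      exact this h0
    obtain ⟨s, hs, hφs⟩ := hspan ht
    have h1 : φ (t - s) = 0 := by rw [map_sub, hφs, sub_self]
    obtain ⟨w, hw⟩ := (hℤ (t - s)).mp h1
    refine ⟨tmkHom S J A w, ?_⟩
    rw [NCmap_tmk']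
    show tmkHom S J B (ψ w) = tmkHom S J B t
    rw [hw]
    refine (Submodule.Quotient.eq _).mpr ?_
    simpa using (NCRel S J B).neg_mem hs
  · rintro ⟨z, hz⟩
    rw [← hz, ← LinearMap.comp_apply, ← NCmap_comp, hfg.linearMap_comp_eq_zero, NCmap_zero]
    simp

theorem exact_comp_comp {T : Type*} [Ring T] {V W X Y' Y : Type*}
    [AddCommGroup V] [Module T V] [AddCommGroup W] [Module T W] [AddCommGroup X] [Module T X]
    [AddCommGroup Y'] [Module T Y'] [AddCommGroup Y] [Module T Y]
    (s₁ : V →ₗ[T] W) (i₁ : W →ₗ[T] X) (s₂ : X →ₗ[T] Y') (i₂ : Y' →ₗ[T] Y)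
    (hs₁ : Function.Surjective s₁) (hi₂ : Function.Injective i₂)
    (h : Function.Exact i₁ s₂) :
    Function.Exact (i₁.comp s₁) (i₂.comp s₂) := by
  intro x
  constructor
  · intro h0
    have : s₂ x = 0 := by
      apply hi₂
      simpa using h0
    obtain ⟨w, hw⟩ := (h x).mp this
    obtain ⟨v, hv⟩ := hs₁ w
    exact ⟨v, by simp [hv, hw]⟩
  · rintro ⟨v, rfl⟩
    have : s₂ (i₁ (s₁ v)) = 0 := (h _).mpr ⟨s₁ v, rfl⟩
    simp [this]

end NCAux2
section NCFree
open MulOpposite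

variable (S : Type u) [Ring S]

/-- `n ⊗ r ↦ op r • n` as a ℤ-bilinear map. -/
noncomputable def opSmulBil (N : Type u) [AddCommGroup N] [Module Sᵐᵒᵖ N] :
    N →ₗ[ℤ] S →ₗ[ℤ] N where
  toFun n :=
    { toFun := fun r => op r • n
      map_add' := fun r r' => by
        show op (r + r') • n = op r • n + op r' • n
        rw [op_add, add_smul]
      map_smul' := fun z r => by
        show op (z • r) • n = z • (op r • n)
        rw [MulOpposite.op_smul, smul_assoc] }
  map_add' n n' := by
    ext r
    show op r • (n + n') = op r • n + op r • n'
    rw [smul_add]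
  map_smul' z n := by
    ext r
    show op r • (z • n) = z • (op r • n)
    rw [smul_comm]

noncomputable def cmap (N : Type u) [AddCommGroup N] [Module Sᵐᵒᵖ N] :
    (N ⊗[ℤ] S) →ₗ[ℤ] N :=
  TensorProduct.lift (opSmulBil S N)

@[simp] theorem cmap_tmul (N : Type u) [AddCommGroup N] [Module Sᵐᵒᵖ N] (n : N) (r : S) :
    cmap S N (n ⊗ₜ[ℤ] r) = op r • n := rfl

noncomputable def freeT (N : Type u) [AddCommGroup N] [Module Sᵐᵒᵖ N] (ι : Type u) [DecidableEq ι] :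
    (N ⊗[ℤ] (ι →₀ S)) →ₗ[ℤ] (ι →₀ N) :=
  (Finsupp.mapRange.linearMap (cmap S N)).comp
    (TensorProduct.finsuppRight ℤ ℤ N S ι).toLinearMap

theorem freeT_tmul_apply (N : Type u) [AddCommGroup N] [Module Sᵐᵒᵖ N] (ι : Type u) [DecidableEq ι]
    (n : N) (v : ι →₀ S) (i : ι) :
    freeT S N ι (n ⊗ₜ[ℤ] v) i = op (v i) • n := by
  show Finsupp.mapRange (cmap S N) (map_zero _)
    (TensorProduct.finsuppRight ℤ ℤ N S ι (n ⊗ₜ[ℤ] v)) i = _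
  rw [Finsupp.mapRange_apply, TensorProduct.finsuppRight_apply_tmul_apply, cmap_tmul]

theorem freeT_tmul_single (N : Type u) [AddCommGroup N] [Module Sᵐᵒᵖ N] (ι : Type u) [DecidableEq ι]
    (n : N) (i : ι) (r : S) :
    freeT S N ι (n ⊗ₜ[ℤ] Finsupp.single i r) = Finsupp.single i (op r • n) := by
  ext j
  rw [freeT_tmul_apply]
  rcases eq_or_ne i j with rfl | h
  · simp
  · rw [Finsupp.single_eq_of_ne' h, Finsupp.single_eq_of_ne' h]
    simp

theorem freeT_rel (N : Type u) [AddCommGroup N] [Module Sᵐᵒᵖ N] (ι : Type u) [DecidableEq ι] :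
    NCRel S N (ι →₀ S) ≤ LinearMap.ker (freeT S N ι) := by
  rw [NCRel, Submodule.span_le]
  rintro t ⟨n, r, v, rfl⟩
  simp only [SetLike.mem_coe, LinearMap.mem_ker, map_sub]
  ext i
  simp only [Finsupp.sub_apply, freeT_tmul_apply, Finsupp.smul_apply, smul_eq_mul,
    Finsupp.coe_zero, Pi.zero_apply]
  rw [op_mul, mul_smul]
  exact sub_self _

/-- The canonical map `N ⊗[S] (ι →₀ S) → (ι →₀ N)`. -/
noncomputable def freeTbar (N : Type u) [AddCommGroup N] [Module Sᵐᵒᵖ N] (ι : Type u) [DecidableEq ι] :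
    NCTensor S N (ι →₀ S) →ₗ[ℤ] (ι →₀ N) :=
  Submodule.liftQ _ (freeT S N ι) (freeT_rel S N ι)

theorem freeTbar_tmk (N : Type u) [AddCommGroup N] [Module Sᵐᵒᵖ N] (ι : Type u) [DecidableEq ι]
    (t : N ⊗[ℤ] (ι →₀ S)) :
    freeTbar S N ι (tmkHom S N (ι →₀ S) t) = freeT S N ι t := rfl

/-- The inverse map `(ι →₀ N) → N ⊗[S] (ι →₀ S)`. -/
noncomputable def freeU (N : Type u) [AddCommGroup N] [Module Sᵐᵒᵖ N] (ι : Type u) [DecidableEq ι] :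
    (ι →₀ N) →ₗ[ℤ] NCTensor S N (ι →₀ S) :=
  Finsupp.lsum ℤ fun i =>
    (tmkHom S N (ι →₀ S)).comp ((TensorProduct.mk ℤ N (ι →₀ S)).flip (Finsupp.single i 1))

theorem freeU_single (N : Type u) [AddCommGroup N] [Module Sᵐᵒᵖ N] (ι : Type u) [DecidableEq ι] (i : ι) (n : N) :
    freeU S N ι (Finsupp.single i n) = tmkHom S N (ι →₀ S) (n ⊗ₜ[ℤ] Finsupp.single i 1) := by
  simp [freeU]
  rfl

theorem tmk_single_smul (N : Type u) [AddCommGroup N] [Module Sᵐᵒᵖ N] (ι : Type u) [DecidableEq ι] (i : ι)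
    (n : N) (r : S) :
    tmkHom S N (ι →₀ S) ((op r • n) ⊗ₜ[ℤ] Finsupp.single i 1) =
      tmkHom S N (ι →₀ S) (n ⊗ₜ[ℤ] Finsupp.single i r) := by
  refine (Submodule.Quotient.eq _).mpr ?_
  have : (n ⊗ₜ[ℤ] Finsupp.single i r : N ⊗[ℤ] (ι →₀ S)) =
      n ⊗ₜ[ℤ] (r • Finsupp.single i (1 : S)) := by
    rw [Finsupp.smul_single, smul_eq_mul, mul_one]
  rw [this]
  exact Submodule.subset_span ⟨n, r, Finsupp.single i 1, rfl⟩

theorem freeU_freeTbar (N : Type u) [AddCommGroup N] [Module Sᵐᵒᵖ N] (ι : Type u) [DecidableEq ι]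
    (x : NCTensor S N (ι →₀ S)) :
    freeU S N ι (freeTbar S N ι x) = x := by
  refine NCTensor.induction_on
    (P := fun x => freeU S N ι (freeTbar S N ι x) = x) S x (by simp) ?_ ?_
  · intro n v
    rw [freeTbar_tmk]
    induction v using Finsupp.induction with
    | zero => simp [TensorProduct.tmul_zero, map_zero]
    | single_add i r v hi hr ih =>
      rw [TensorProduct.tmul_add, map_add, map_add, map_add, ← ih]
      congr 1
      rw [freeT_tmul_single, freeU_single, tmk_single_smul]
  · intro a b ha hb
    rw [map_add, map_add, ha, hb]

theorem freeTbar_natural (N N' : Type u) [AddCommGroup N] [Module Sᵐᵒᵖ N] [AddCommGroup N']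
    [Module Sᵐᵒᵖ N'] (ι : Type u) [DecidableEq ι] (f : N →ₗ[Sᵐᵒᵖ] N') :
    (freeTbar S N' ι).comp (NCmapL S (ι →₀ S) f) =
      (Finsupp.mapRange.linearMap f.toAddMonoidHom.toIntLinearMap).comp (freeTbar S N ι) := by
  refine NCTensor.hom_ext S ?_
  intro n v
  rw [LinearMap.comp_apply, LinearMap.comp_apply, NCmapL_tmk, freeTbar_tmk, freeTbar_tmk]
  ext i
  simp [freeT_tmul_apply, LinearMap.map_smul]

theorem flatModule_free (ι : Type u) : FlatModule S (ι →₀ S) := by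
  classical
  intro N N' _ _ _ _ f hf
  intro x y hxy
  have h1 : freeTbar S N' ι (NCmapL S (ι →₀ S) f x) = freeTbar S N' ι (NCmapL S (ι →₀ S) f y) :=
    by rw [hxy]
  rw [← LinearMap.comp_apply, ← LinearMap.comp_apply, freeTbar_natural] at h1
  have h2 : freeTbar S N ι x = freeTbar S N ι y := by
    refine Finsupp.mapRange_injective (fun n => f n) (map_zero f) hf ?_
    simpa [Finsupp.mapRange.linearMap] using h1
  calc x = freeU S N ι (freeTbar S N ι x) := (freeU_freeTbar S N ι x).symm
    _ = freeU S N ι (freeTbar S N ι y) := by rw [h2]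
    _ = y := freeU_freeTbar S N ι y

end NCFree
section Transfer
open MulOpposite

/-- Transfer `Module.Injective` along the ring isomorphism `R ≃+* Rᵐᵒᵖᵐᵒᵖ`. -/
theorem injective_of_opOp (R : Type u) [Ring R] (J : Type u) [AddCommGroup J]
    [Module Rᵐᵒᵖᵐᵒᵖ J] (hJ : Module.Injective Rᵐᵒᵖᵐᵒᵖ J) :
    letI : Module R J := Module.compHom J (RingEquiv.opOp R).toRingHom
    Module.Injective R J := by
  letI : Module R J := Module.compHom J (RingEquiv.opOp R).toRingHom
  constructor
  intro X Y _ _ _ _ f hf g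
  letI iX : Module Rᵐᵒᵖᵐᵒᵖ X := Module.compHom X (RingEquiv.opOp R).symm.toRingHom
  letI iY : Module Rᵐᵒᵖᵐᵒᵖ Y := Module.compHom Y (RingEquiv.opOp R).symm.toRingHom
  let f' : X →ₗ[Rᵐᵒᵖᵐᵒᵖ] Y :=
    { toFun := f
      map_add' := f.map_add
      map_smul' := fun s x => f.map_smul ((RingEquiv.opOp R).symm s) x }
  let g' : X →ₗ[Rᵐᵒᵖᵐᵒᵖ] J :=
    { toFun := g
      map_add' := g.map_add
      map_smul' := fun s x => by
        show g (((RingEquiv.opOp R).symm s) • x) = s • g x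
        rw [g.map_smul]
        show (RingEquiv.opOp R) ((RingEquiv.opOp R).symm s) • g x = s • g x
        rw [RingEquiv.apply_symm_apply] }
  have hf' : Function.Injective f' := hf
  obtain ⟨h, hh⟩ := hJ.out f' hf' g'
  refine ⟨{ toFun := h, map_add' := h.map_add,
            map_smul' := fun r y => h.map_smul (op (op r)) y }, hh⟩

/-- From flatness of injective left `R`-modules, tensoring with an injective right
`R`-module (i.e. `Rᵐᵒᵖᵐᵒᵖ`-module) preserves injections of left `Rᵐᵒᵖ`-modules. -/
theorem NCmap_injective_of_injective (R : Type u) [Ring R]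
    (hleft : ∀ I : ModuleCat.{u} R, Module.Injective R ↥I → FlatModule R ↥I)
    (J : Type u) [AddCommGroup J] [Module Rᵐᵒᵖᵐᵒᵖ J] (hJ : Module.Injective Rᵐᵒᵖᵐᵒᵖ J)
    {A B : Type u} [AddCommGroup A] [Module Rᵐᵒᵖ A] [AddCommGroup B] [Module Rᵐᵒᵖ B]
    (f : A →ₗ[Rᵐᵒᵖ] B) (hf : Function.Injective f) :
    Function.Injective (NCmap Rᵐᵒᵖ J f) := by
  letI : Module R J := Module.compHom J (RingEquiv.opOp R).toRingHom
  haveI hinj : Module.Injective R J := injective_of_opOp R J hJ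
  have hflat : FlatModule R ↥(ModuleCat.of R J) := hleft (ModuleCat.of R J) hinj
  have hmap : ∀ (C : Type u) [AddCommGroup C] [Module Rᵐᵒᵖ C],
      (NCRel Rᵐᵒᵖ J C).map (TensorProduct.comm ℤ J C).toLinearMap = NCRel R C J := by
    intro C _ _
    apply le_antisymm
    · refine Submodule.map_le_iff_le_comap.mpr ?_; rw [NCRel]; refine Submodule.span_le.mpr ?_
      rintro t ⟨j, ρ, c, rfl⟩
      show (TensorProduct.comm ℤ J C) ((op ρ • j) ⊗ₜ[ℤ] c - j ⊗ₜ[ℤ] (ρ • c)) ∈ NCRel R C J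
      rw [map_sub, TensorProduct.comm_tmul, TensorProduct.comm_tmul]
      have : (c ⊗ₜ[ℤ] (op ρ • j) - (ρ • c) ⊗ₜ[ℤ] j : C ⊗[ℤ] J) =
          -((op (unop ρ) • c) ⊗ₜ[ℤ] j - c ⊗ₜ[ℤ] ((unop ρ) • j)) := by
        rw [neg_sub]
        rfl
      rw [this]
      exact (NCRel R C J).neg_mem (Submodule.subset_span ⟨c, unop ρ, j, rfl⟩)
    · rw [NCRel]; refine Submodule.span_le.mpr ?_
      rintro t ⟨c, r, j, rfl⟩
      refine ⟨j ⊗ₜ[ℤ] (op r • c) - (r • j) ⊗ₜ[ℤ] c, ?_, ?_⟩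
      · have : (j ⊗ₜ[ℤ] (op r • c) - (r • j) ⊗ₜ[ℤ] c : J ⊗[ℤ] C) =
            -((op (op r) • j) ⊗ₜ[ℤ] c - j ⊗ₜ[ℤ] ((op r) • c)) := by
          rw [neg_sub]
          rfl
        rw [this]
        exact (NCRel Rᵐᵒᵖ J C).neg_mem (Submodule.subset_span ⟨j, op r, c, rfl⟩)
      · simp only [map_sub, LinearEquiv.coe_coe, TensorProduct.comm_tmul]
  let eA : NCTensor Rᵐᵒᵖ J A ≃ₗ[ℤ] NCTensor R A J :=
    Submodule.Quotient.equiv _ _ (TensorProduct.comm ℤ J A) (hmap A)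
  let eB : NCTensor Rᵐᵒᵖ J B ≃ₗ[ℤ] NCTensor R B J :=
    Submodule.Quotient.equiv _ _ (TensorProduct.comm ℤ J B) (hmap B)
  have hnat : ∀ x : NCTensor Rᵐᵒᵖ J A,
      eB (NCmap Rᵐᵒᵖ J f x) = NCmapL R J f (eA x) := by
    intro x
    refine NCTensor.induction_on
      (P := fun x => eB (NCmap Rᵐᵒᵖ J f x) = NCmapL R J f (eA x)) Rᵐᵒᵖ x (by simp) ?_ ?_
    · intro j a
      rfl
    · intro a b ha hb
      rw [map_add, map_add, map_add, map_add, ha, hb]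
  intro x y hxy
  have h1 : NCmapL R J f (eA x) = NCmapL R J f (eA y) := by
    rw [← hnat, ← hnat, hxy]
  have h2 : eA x = eA y := hflat A B f hf h1
  exact eA.injective h2

end Transfer
section Build
open CategoryTheory

variable (S : Type u) [Ring S]

theorem exact_subtype_ker' {A B : Type u} [AddCommGroup A] [Module S A] [AddCommGroup B]
    [Module S B] (f : A →ₗ[S] B) :
    Function.Exact (LinearMap.ker f).subtype f := by
  intro x
  constructor
  · intro h0
    exact ⟨⟨x, h0⟩, rfl⟩
  · rintro ⟨⟨y, hy⟩, rfl⟩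
    exact hy

theorem exact_mkQ_range' {A B : Type u} [AddCommGroup A] [Module S A] [AddCommGroup B]
    [Module S B] (f : A →ₗ[S] B) :
    Function.Exact f (LinearMap.range f).mkQ := by
  intro x
  rw [Submodule.mkQ_apply, Submodule.Quotient.mk_eq_zero]
  exact Iff.rfl

/-- Augmentation from the free module on the underlying set. -/
noncomputable def epsMap (A : ModuleCat.{u} S) : (↥A →₀ S) →ₗ[S] ↥A :=
  Finsupp.linearCombination S id

theorem epsMap_surjective (A : ModuleCat.{u} S) : Function.Surjective (epsMap S A) :=
  Finsupp.linearCombination_surjective S Function.surjective_id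

/-- Iterated kernels of the free resolution. -/
noncomputable def leftL (M : ModuleCat.{u} S) : ℕ → ModuleCat.{u} S
  | 0 => M
  | n + 1 => ModuleCat.of S (LinearMap.ker (epsMap S (leftL M n)))

/-- Free modules in the resolution. -/
noncomputable def Pmod (M : ModuleCat.{u} S) (n : ℕ) : ModuleCat.{u} S :=
  ModuleCat.of S (↥(leftL S M n) →₀ S)

noncomputable def sigmaMap (M : ModuleCat.{u} S) (n : ℕ) :
    ↥(Pmod S M n) →ₗ[S] ↥(leftL S M n) :=
  epsMap S (leftL S M n)

theorem sigmaMap_surjective (M : ModuleCat.{u} S) (n : ℕ) :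
    Function.Surjective (sigmaMap S M n) :=
  epsMap_surjective S (leftL S M n)

noncomputable def incMap (M : ModuleCat.{u} S) (n : ℕ) :
    ↥(leftL S M (n + 1)) →ₗ[S] ↥(Pmod S M n) :=
  (LinearMap.ker (epsMap S (leftL S M n))).subtype

theorem incMap_injective (M : ModuleCat.{u} S) (n : ℕ) :
    Function.Injective (incMap S M n) :=
  Submodule.injective_subtype _

theorem exact_inc_sigma (M : ModuleCat.{u} S) (n : ℕ) :
    Function.Exact (incMap S M n) (sigmaMap S M n) :=
  exact_subtype_ker' S (epsMap S (leftL S M n))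

/-- Iterated cokernels of the injective coresolution. -/
noncomputable def rightK (M : ModuleCat.{u} S) : ℕ → ModuleCat.{u} S
  | 0 => M
  | n + 1 =>
    ModuleCat.of S
      (↥(Injective.under (rightK M n)) ⧸ LinearMap.range (Injective.ι (rightK M n)).hom)

/-- Injective modules in the coresolution. -/
noncomputable def Imod (M : ModuleCat.{u} S) (n : ℕ) : ModuleCat.{u} S :=
  Injective.under (rightK S M n)

noncomputable def iotaMap (M : ModuleCat.{u} S) (n : ℕ) :
    ↥(rightK S M n) →ₗ[S] ↥(Imod S M n) := by
  exact (Injective.ι (rightK S M n)).hom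

theorem iotaMap_injective (M : ModuleCat.{u} S) (n : ℕ) :
    Function.Injective (iotaMap S M n) := by
  exact (ModuleCat.mono_iff_injective (Injective.ι (rightK S M n))).mp inferInstance

theorem Imod_injective (M : ModuleCat.{u} S) (n : ℕ) : Module.Injective S ↥(Imod S M n) := by
  refine Module.injective_module_of_injective_object S ↥(Imod S M n) (inj := ?_)
  exact Injective.injective_under (rightK S M n)

noncomputable def piMap (M : ModuleCat.{u} S) (n : ℕ) :
    ↥(Imod S M n) →ₗ[S] ↥(rightK S M (n + 1)) := by
  exact (LinearMap.range (Injective.ι (rightK S M n)).hom).mkQ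

theorem piMap_surjective (M : ModuleCat.{u} S) (n : ℕ) :
    Function.Surjective (piMap S M n) := by
  exact Submodule.mkQ_surjective (LinearMap.range (Injective.ι (rightK S M n)).hom)

theorem exact_iota_pi (M : ModuleCat.{u} S) (n : ℕ) :
    Function.Exact (iotaMap S M n) (piMap S M n) := by
  exact exact_mkQ_range' S (iotaMap S M n)

/-- The doubly infinite complex. -/
noncomputable def glueF (M : ModuleCat.{u} S) : ℤ → ModuleCat.{u} S
  | Int.ofNat n => Pmod S M n
  | Int.negSucc n => Imod S M n

noncomputable def glueD (M : ModuleCat.{u} S) :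
    (z : ℤ) → ↥(glueF S M (z + 1)) →ₗ[S] ↥(glueF S M z)
  | Int.ofNat n => (incMap S M n).comp (sigmaMap S M (n + 1))
  | Int.negSucc 0 => (iotaMap S M 0).comp (sigmaMap S M 0)
  | Int.negSucc (n + 1) => (iotaMap S M (n + 1)).comp (piMap S M n)

end Build
section Assemble
open CategoryTheory

theorem NCmap_glue_exact (S : Type u) [Ring S] {J : Type u} [AddCommGroup J] [Module Sᵐᵒᵖ J]
    {V W X Y' Y : Type u} [AddCommGroup V] [Module S V] [AddCommGroup W] [Module S W]
    [AddCommGroup X] [Module S X] [AddCommGroup Y'] [Module S Y'] [AddCommGroup Y] [Module S Y]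
    (s₁ : V →ₗ[S] W) (i₁ : W →ₗ[S] X) (s₂ : X →ₗ[S] Y') (i₂ : Y' →ₗ[S] Y)
    (hs₁ : Function.Surjective s₁) (hs₂ : Function.Surjective s₂)
    (hi₂T : Function.Injective (NCmap S J i₂)) (h : Function.Exact i₁ s₂) :
    Function.Exact (NCmap S J (i₁.comp s₁)) (NCmap S J (i₂.comp s₂)) := by
  rw [NCmap_comp, NCmap_comp]
  exact exact_comp_comp (NCmap S J s₁) (NCmap S J i₁) (NCmap S J s₂) (NCmap S J i₂)
    (NCmap_surjective S s₁ hs₁) hi₂T (NCmap_exact S i₁ s₂ h hs₂)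

/-- The complete flat resolution of an arbitrary module over a ring all of whose
injective modules (on both sides) are flat. -/
noncomputable def buildRes (S : Type u) [Ring S] (M : ModuleCat.{u} S)
    (hflatInj : ∀ (I : Type u) [AddCommGroup I] [Module S I],
      Module.Injective S I → FlatModule S I)
    (hJmono : ∀ (J : Type u) [AddCommGroup J] [Module Sᵐᵒᵖ J], Module.Injective Sᵐᵒᵖ J →
      ∀ {A B : Type u} [AddCommGroup A] [Module S A] [AddCommGroup B] [Module S B]
        (f : A →ₗ[S] B), Function.Injective f → Function.Injective (NCmap S J f)) :
    CompleteFlatResolution S ↥M where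
  F := glueF S M
  d := glueD S M
  flat z := by
    cases z with
    | ofNat n => exact flatModule_free S ↥(leftL S M n)
    | negSucc n => exact hflatInj ↥(Imod S M n) (Imod_injective S M n)
  exact z := by
    cases z with
    | ofNat n =>
      exact exact_comp_comp (sigmaMap S M (n + 2)) (incMap S M (n + 1)) (sigmaMap S M (n + 1))
        (incMap S M n) (sigmaMap_surjective S M (n + 2)) (incMap_injective S M n)
        (exact_inc_sigma S M (n + 1))
    | negSucc n =>
      cases n with
      | zero =>
        exact exact_comp_comp (sigmaMap S M 1) (incMap S M 0) (sigmaMap S M 0)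
          (iotaMap S M 0) (sigmaMap_surjective S M 1) (iotaMap_injective S M 0)
          (exact_inc_sigma S M 0)
      | succ n =>
        cases n with
        | zero =>
          exact exact_comp_comp (sigmaMap S M 0) (iotaMap S M 0) (piMap S M 0)
            (iotaMap S M 1) (sigmaMap_surjective S M 0) (iotaMap_injective S M 1)
            (exact_iota_pi S M 0)
        | succ n =>
          exact exact_comp_comp (piMap S M n) (iotaMap S M (n + 1)) (piMap S M (n + 1))
            (iotaMap S M (n + 2)) (piMap_surjective S M n) (iotaMap_injective S M (n + 2))
            (exact_iota_pi S M (n + 1))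
  iso := by
    have h1 : Function.Injective (iotaMap S M 0) := iotaMap_injective S M 0
    have h2 : LinearMap.range ((iotaMap S M 0).comp (sigmaMap S M 0)) =
        LinearMap.range (iotaMap S M 0) :=
      LinearMap.range_comp_of_range_eq_top _
        (LinearMap.range_eq_top.mpr (sigmaMap_surjective S M 0))
    exact ⟨(LinearEquiv.ofInjective (iotaMap S M 0) h1).trans (LinearEquiv.ofEq _ _ h2.symm)⟩
  tensorExact I _ _ hI z := by
    cases z with
    | ofNat n =>
      exact NCmap_glue_exact S (sigmaMap S M (n + 2)) (incMap S M (n + 1)) (sigmaMap S M (n + 1))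
        (incMap S M n) (sigmaMap_surjective S M (n + 2)) (sigmaMap_surjective S M (n + 1))
        (hJmono I hI (incMap S M n) (incMap_injective S M n)) (exact_inc_sigma S M (n + 1))
    | negSucc n =>
      cases n with
      | zero =>
        exact NCmap_glue_exact S (sigmaMap S M 1) (incMap S M 0) (sigmaMap S M 0)
          (iotaMap S M 0) (sigmaMap_surjective S M 1) (sigmaMap_surjective S M 0)
          (hJmono I hI (iotaMap S M 0) (iotaMap_injective S M 0)) (exact_inc_sigma S M 0)
      | succ n =>
        cases n with
        | zero =>
          exact NCmap_glue_exact S (sigmaMap S M 0) (iotaMap S M 0) (piMap S M 0)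
            (iotaMap S M 1) (sigmaMap_surjective S M 0) (piMap_surjective S M 0)
            (hJmono I hI (iotaMap S M 1) (iotaMap_injective S M 1)) (exact_iota_pi S M 0)
        | succ n =>
          exact NCmap_glue_exact S (piMap S M n) (iotaMap S M (n + 1)) (piMap S M (n + 1))
            (iotaMap S M (n + 2)) (piMap_surjective S M n) (piMap_surjective S M (n + 1))
            (hJmono I hI (iotaMap S M (n + 2)) (iotaMap_injective S M (n + 2)))
            (exact_iota_pi S M (n + 1))

end Assemble
/-- If every injective left `R`-module and every injective right `R`-module is flat
(`R` is an IF ring), then every right `R`-module is Gorenstein flat, i.e.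
`r.wGgldim R = 0`. (Right `R`-modules are regarded as left `Rᵐᵒᵖ`-modules.) -/
theorem stmt1 (R : Type u) [Ring R]
    (hleft : ∀ I : ModuleCat.{u} R, Module.Injective R ↥I → FlatModule R ↥I)
    (hright : ∀ I : ModuleCat.{u} Rᵐᵒᵖ, Module.Injective Rᵐᵒᵖ ↥I → FlatModule Rᵐᵒᵖ ↥I) :
    ∀ M : ModuleCat.{u} Rᵐᵒᵖ, IsGorensteinFlat Rᵐᵒᵖ ↥M := by
  intro M
  refine ⟨buildRes Rᵐᵒᵖ M ?_ ?_⟩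
  · intro I _ _ hI
    exact hright (ModuleCat.of Rᵐᵒᵖ I) hI
  · intro J _ _ hJ A B _ _ _ _ f hf
    exact NCmap_injective_of_injective R hleft J hJ f hf
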